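/- Let φ : (0,a) → ℝ be differentiable and satisfy the scalar Fuchsian ODE φ'(r) = λ·r⁻¹·φ(r) + m(r)·φ(r), where m : [0,a) → ℝ is continuous with r·m(r) → 0 as r → 0⁺. If φ(r) = O(r^{λ+ε}) as r → 0⁺ for some ε > 0, then φ is identically zero. -/

import Mathlib

open Filter Set MeasureTheory intervalIntegral Real

/-- scalar Fuchsian ODE lemma: a solution of
`φ' = λ r⁻¹ φ + m(r) φ` on `(0,a)` with `r·m(r) → 0` as `r → 0⁺` which is
`O(r^{λ+ε})` near `r = 0` for some `ε > 0` vanishes identically. -/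
theorem scalar_fuchsian_ode_uniqueness {a lam ε : ℝ} (ha : 0 < a) (m : ℝ → ℝ)
    (hmcont : ContinuousOn m (Set.Ico 0 a))
    (hm0 : Filter.Tendsto (fun r => r * m r) (nhdsWithin 0 (Set.Ioi 0)) (nhds 0))
    (φ : ℝ → ℝ)
    (hφ : ∀ r ∈ Set.Ioo 0 a, HasDerivAt φ (lam * r⁻¹ * φ r + m r * φ r) r)
    (hε : 0 < ε)
    (hO : φ =O[nhdsWithin 0 (Set.Ioi 0)] fun r => r ^ (lam + ε)) :
    ∀ r ∈ Set.Ioo 0 a, φ r = 0 := by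
  obtain ⟨C, hC⟩ := hO.bound
  set M : ℝ → ℝ := fun r => ∫ t in (0:ℝ)..r, m t with hMdef
  -- interval integrability on [0,b] for b < a
  have hmint : ∀ b ∈ Set.Ico (0:ℝ) a, IntervalIntegrable m volume 0 b := by
    intro b hb
    apply ContinuousOn.intervalIntegrable
    apply hmcont.mono
    rw [Set.uIcc_of_le hb.1]
    exact fun x hx => ⟨hx.1, lt_of_le_of_lt hx.2 hb.2⟩
  -- derivative of M
  have hMderiv : ∀ r ∈ Set.Ioo (0:ℝ) a, HasDerivAt M (m r) r := by
    intro r hr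
    have hmem : Set.Ico (0:ℝ) a ∈ nhds r :=
      mem_nhds_iff.2 ⟨Set.Ioo 0 a, Set.Ioo_subset_Ico_self, isOpen_Ioo, hr⟩
    have hcontAt : ContinuousAt m r := hmcont.continuousAt hmem
    exact intervalIntegral.integral_hasDerivAt_right (hmint r ⟨hr.1.le, hr.2⟩)
      (ContinuousOn.stronglyMeasurableAtFilter isOpen_Ioo (hmcont.mono Set.Ioo_subset_Ico_self) r hr) hcontAt
  -- weight function E
  set E : ℝ → ℝ := fun r => Real.exp (-(lam * Real.log r) - M r) with hEdef
  have hEpos : ∀ r, 0 < E r := fun r => Real.exp_pos _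
  have hEderiv : ∀ r ∈ Set.Ioo (0:ℝ) a,
      HasDerivAt E (E r * (-(lam * r⁻¹) - m r)) r := by
    intro r hr
    have h1 : HasDerivAt (fun s => -(lam * Real.log s) - M s)
        (-(lam * r⁻¹) - m r) r :=
      (((Real.hasDerivAt_log hr.1.ne').const_mul lam).neg).sub (hMderiv r hr)
    simpa [hEdef, mul_comm] using h1.exp
  set g : ℝ → ℝ := fun r => φ r * E r with hgdef
  have hgderiv : ∀ r ∈ Set.Ioo (0:ℝ) a, HasDerivAt g 0 r := by
    intro r hr
    have h2 : HasDerivAt g _ r := (hφ r hr).mul (hEderiv r hr)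
    convert h2 using 1
    ring
  -- g is constant on (0,a)
  have hgconst : ∀ r ∈ Set.Ioo (0:ℝ) a, ∀ s ∈ Set.Ioo (0:ℝ) a, s ≤ r → g r = g s := by
    intro r hr s hs hsr
    have hsub : Set.Icc s r ⊆ Set.Ioo 0 a :=
      fun x hx => ⟨lt_of_lt_of_le hs.1 hx.1, lt_of_le_of_lt hx.2 hr.2⟩
    have := constant_of_has_deriv_right_zero
      (f := g) (a := s) (b := r)
      (fun x hx => ((hgderiv x (hsub hx)).differentiableAt).continuousAt.continuousWithinAt)
      (fun x hx => ((hgderiv x (hsub (Set.Ico_subset_Icc_self hx))).hasDerivWithinAt))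
    exact this r ⟨hsr, le_rfl⟩
  -- M tends to 0 at 0+
  have hM0 : Filter.Tendsto M (nhdsWithin 0 (Set.Ioi 0)) (nhds 0) := by
    have hint : IntegrableOn m (Set.uIcc 0 (a/2)) volume := by
      have h3 := hmint (a/2) ⟨by positivity, by linarith⟩
      rw [intervalIntegrable_iff_integrableOn_Icc_of_le (by positivity)] at h3
      rwa [Set.uIcc_of_le (by positivity)]
    have hcM : ContinuousOn M (Set.uIcc 0 (a/2)) :=
      intervalIntegral.continuousOn_primitive_interval hint
    have hcw : ContinuousWithinAt M (Set.uIcc 0 (a/2)) 0 := hcM 0 Set.left_mem_uIcc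
    have hM00 : M 0 = 0 := by simp [hMdef]
    have hcwt : Filter.Tendsto M (nhdsWithin 0 (Set.uIcc 0 (a/2))) (nhds (M 0)) := hcw.tendsto
    rw [hM00] at hcwt
    have heq : nhdsWithin (0:ℝ) (Set.Ioi 0) = nhdsWithin 0 (Set.Ioo 0 (a/2)) :=
      (nhdsWithin_Ioo_eq_nhdsGT (by positivity)).symm
    rw [heq]
    refine hcwt.mono_left (nhdsWithin_mono 0 ?_)
    rw [Set.uIcc_of_le (by positivity)]
    exact Set.Ioo_subset_Icc_self
  -- main conclusion
  intro r hr
  have hgr0 : g r = 0 := by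
    have hbound : ∀ᶠ s in nhdsWithin (0:ℝ) (Set.Ioi 0),
        |g r| ≤ C * (s ^ ε * Real.exp (-(M s))) := by
      have hev : ∀ᶠ s in nhdsWithin (0:ℝ) (Set.Ioi 0), s ∈ Set.Ioo 0 r := by
        rw [← nhdsWithin_Ioo_eq_nhdsGT hr.1]
        exact eventually_mem_nhdsWithin
      filter_upwards [hC, hev] with s hs1 hs2
      have hsa : s ∈ Set.Ioo 0 a := ⟨hs2.1, hs2.2.trans hr.2⟩
      rw [hgconst r hr s hsa hs2.2.le]
      have hEeq : s ^ (lam + ε) * E s = s ^ ε * Real.exp (-(M s)) := by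
        rw [hEdef]
        rw [Real.rpow_def_of_pos hs2.1, Real.rpow_def_of_pos hs2.1, ← Real.exp_add,
          ← Real.exp_add]
        ring_nf
      have hnorm : ‖(s : ℝ) ^ (lam + ε)‖ = s ^ (lam + ε) := by
        rw [Real.norm_eq_abs, abs_of_pos (Real.rpow_pos_of_pos hs2.1 _)]
      calc |g s| = |φ s| * E s := by
              rw [hgdef]; rw [abs_mul, abs_of_pos (hEpos s)]
        _ ≤ (C * (s ^ (lam + ε))) * E s := by
              apply mul_le_mul_of_nonneg_right _ (hEpos s).le
              calc |φ s| = ‖φ s‖ := rfl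
                _ ≤ C * ‖(s:ℝ) ^ (lam + ε)‖ := hs1
                _ = C * (s ^ (lam + ε)) := by rw [hnorm]
        _ = C * (s ^ ε * Real.exp (-(M s))) := by rw [mul_assoc, hEeq]
    have htend : Filter.Tendsto (fun s => C * (s ^ ε * Real.exp (-(M s))))
        (nhdsWithin (0:ℝ) (Set.Ioi 0)) (nhds 0) := by
      have h1 : Filter.Tendsto (fun s : ℝ => s ^ ε) (nhdsWithin (0:ℝ) (Set.Ioi 0))
          (nhds 0) := by
        have := (Real.continuousAt_rpow_const 0 ε (Or.inr hε.le)).tendsto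
        rw [Real.zero_rpow hε.ne'] at this
        exact this.mono_left nhdsWithin_le_nhds
      have h2 : Filter.Tendsto (fun s => Real.exp (-(M s)))
          (nhdsWithin (0:ℝ) (Set.Ioi 0)) (nhds 1) := by
        have hn := hM0.neg
        rw [neg_zero] at hn
        have := (Real.continuous_exp.tendsto 0).comp hn
        simpa [Function.comp_def] using this
      have := (tendsto_const_nhds (x := C)).mul (h1.mul h2)
      simpa using this
    have : |g r| ≤ 0 := ge_of_tendsto htend hbound
    exact abs_eq_zero.mp (le_antisymm this (abs_nonneg _))
  have := mul_eq_zero.mp hgr0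
  rcases this with h | h
  · exact h
  · exact absurd h (hEpos r).ne'
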